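/- The interval decomposition is unique: if S and T are two finite multisets of pairs (a,b) of integers with 0 ≤ a ≤ b ≤ 2n such that the direct sums of interval representations ⊕_{(a,b)∈S} I_{[a,b]} and ⊕_{(a,b)∈T} I_{[a,b]} are isomorphic as representations of the quiver (i.e. there are linear isomorphisms at each vertex commuting with all structure maps), then S = T as multisets. (Uniqueness part of Corollary 7.2.) -/

import Mathlib

namespace ThreeCusps

/-- The vertex `2j` (the target of the first arrow out of `2j+1`), as an element of
`Fin (2n+1)`, for `j : Fin n`. -/
def vA {n : ℕ} (j : Fin n) : Fin (2 * n + 1) := ⟨2 * (j : ℕ), by have := j.isLt; omega⟩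

/-- The vertex `2j+1` (a source vertex of the quiver), as an element of `Fin (2n+1)`. -/
def vB {n : ℕ} (j : Fin n) : Fin (2 * n + 1) := ⟨2 * (j : ℕ) + 1, by have := j.isLt; omega⟩

/-- The vertex `2j+2` (the target of the second arrow out of `2j+1`). -/
def vC {n : ℕ} (j : Fin n) : Fin (2 * n + 1) := ⟨2 * (j : ℕ) + 2, by have := j.isLt; omega⟩

/-- The vertex space, at the vertex `v`, of the direct sum of the interval
representations `I_{[a i, b i]}`, `i : Fin m`: one copy of `k` for each interval
containing `v`. -/
def IntervalSum (k : Type*) [Field k] {m : ℕ} (a b : Fin m → ℕ) (v : ℕ) : Type _ :=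
  {i : Fin m // a i ≤ v ∧ v ≤ b i} → k

noncomputable instance (k : Type*) [Field k] {m : ℕ} (a b : Fin m → ℕ) (v : ℕ) :
    AddCommGroup (IntervalSum k a b v) :=
  inferInstanceAs (AddCommGroup ({i : Fin m // a i ≤ v ∧ v ≤ b i} → k))

noncomputable instance (k : Type*) [Field k] {m : ℕ} (a b : Fin m → ℕ) (v : ℕ) :
    Module k (IntervalSum k a b v) :=
  inferInstanceAs (Module k ({i : Fin m // a i ≤ v ∧ v ≤ b i} → k))

/-- The structure map, from vertex `w` to vertex `w'`, of the direct sum of the interval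
representations `I_{[a i, b i]}`: on the summand indexed by `i` it is the identity of
`k` if the interval `[a i, b i]` contains both `w` and `w'`, and `0` otherwise. -/
def stepMap (k : Type*) [Field k] {m : ℕ} (a b : Fin m → ℕ) (w w' : ℕ) :
    IntervalSum k a b w →ₗ[k] IntervalSum k a b w' where
  toFun x j := if h : a j.1 ≤ w ∧ w ≤ b j.1 then x ⟨j.1, h⟩ else 0
  map_add' x y := by
    funext j
    show (if h : a j.1 ≤ w ∧ w ≤ b j.1 then (x + y) ⟨j.1, h⟩ else 0) =
      (if h : a j.1 ≤ w ∧ w ≤ b j.1 then x ⟨j.1, h⟩ else 0) +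
        (if h : a j.1 ≤ w ∧ w ≤ b j.1 then y ⟨j.1, h⟩ else 0)
    by_cases h : a j.1 ≤ w ∧ w ≤ b j.1 <;> simp [IntervalSum, h] <;> rfl
  map_smul' c x := by
    funext j
    show (if h : a j.1 ≤ w ∧ w ≤ b j.1 then (c • x) ⟨j.1, h⟩ else 0) =
      c • (if h : a j.1 ≤ w ∧ w ≤ b j.1 then x ⟨j.1, h⟩ else 0)
    by_cases h : a j.1 ≤ w ∧ w ≤ b j.1 <;> simp [IntervalSum, h] <;> rfl

/-! Auxiliary development -/


def hrel (u v A B : ℕ) : Prop :=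
  A ≤ v ∧ u ≤ B ∧ (A = u ∨ (u < A ∧ A % 2 = 1) ∨ (A < u ∧ u % 2 = 0))
    ∧ (B = v ∨ (B < v ∧ B % 2 = 1) ∨ (v < B ∧ v % 2 = 0))

instance (u v A B : ℕ) : Decidable (hrel u v A B) := by unfold hrel; infer_instance

lemma hrel_self {u v : ℕ} (huv : u ≤ v) : hrel u v u v :=
  ⟨huv, huv, Or.inl rfl, Or.inl rfl⟩

def rho (n A B : ℕ) : ℕ :=
  (if A % 2 = 1 then 2*n - A else 2*n+1+A) + (if B % 2 = 1 then B else 4*n+1-B)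

lemma rho_lt {n u v A B : ℕ} (hAB : A ≤ B) (hB : B ≤ 2*n) (huv : u ≤ v) (hv : v ≤ 2*n)
    (hr : hrel u v A B) (hne : ¬(A = u ∧ B = v)) : rho n A B < rho n u v := by
  unfold hrel at hr; unfold rho; split_ifs <;> omega

lemma stepMap_apply {k : Type*} [Field k] {m : ℕ} (a b : Fin m → ℕ) (w w' : ℕ)
    (x : IntervalSum k a b w) (j : {i : Fin m // a i ≤ w' ∧ w' ≤ b i}) :
    stepMap k a b w w' x j = if h : a j.1 ≤ w ∧ w ≤ b j.1 then x ⟨j.1, h⟩ else 0 := rfl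

lemma ite_app {k : Type*} [Field k] {m : ℕ} {a b : Fin m → ℕ} {w : ℕ}
    (c : Prop) [Decidable c] (f g : IntervalSum k a b w) (j) :
    (if c then f else g) j = if c then f j else g j := by split <;> rfl

noncomputable def HomS (k : Type*) [Field k] (n : ℕ) {m : ℕ} (a b : Fin m → ℕ) (u v : ℕ) :
    Submodule k (∀ w : ℕ, IntervalSum k a b w) where
  carrier := {y | (∀ w : ℕ, ¬(u ≤ w ∧ w ≤ v) → y w = 0) ∧
    ∀ j : ℕ, j < n →
      (stepMap k a b (2*j+1) (2*j) (y (2*j+1)) =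
        if u ≤ 2*j ∧ 2*j+1 ≤ v then y (2*j) else 0) ∧
      (stepMap k a b (2*j+1) (2*j+2) (y (2*j+1)) =
        if u ≤ 2*j+1 ∧ 2*j+2 ≤ v then y (2*j+2) else 0)}
  add_mem' := by
    rintro y z ⟨hy0, hy⟩ ⟨hz0, hz⟩
    refine ⟨fun w hw => ?_, fun j hj => ?_⟩
    · show y w + z w = 0
      rw [hy0 w hw, hz0 w hw, add_zero]
    · obtain ⟨hy1, hy2⟩ := hy j hj
      obtain ⟨hz1, hz2⟩ := hz j hj
      constructor
      · show stepMap k a b (2*j+1) (2*j) (y (2*j+1) + z (2*j+1)) =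
          if u ≤ 2*j ∧ 2*j+1 ≤ v then (y + z) (2*j) else 0
        rw [map_add, hy1, hz1]
        split_ifs <;> simp
      · show stepMap k a b (2*j+1) (2*j+2) (y (2*j+1) + z (2*j+1)) =
          if u ≤ 2*j+1 ∧ 2*j+2 ≤ v then (y + z) (2*j+2) else 0
        rw [map_add, hy2, hz2]
        split_ifs <;> simp
  zero_mem' := by
    refine ⟨fun w _ => rfl, fun j hj => ?_⟩
    constructor <;>
    · show stepMap k a b _ _ 0 = _
      rw [map_zero]
      split_ifs <;> rfl
  smul_mem' := by
    rintro c y ⟨hy0, hy⟩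
    refine ⟨fun w hw => ?_, fun j hj => ?_⟩
    · show c • y w = 0
      rw [hy0 w hw, smul_zero]
    · obtain ⟨hy1, hy2⟩ := hy j hj
      constructor
      · show stepMap k a b (2*j+1) (2*j) (c • y (2*j+1)) =
          if u ≤ 2*j ∧ 2*j+1 ≤ v then (c • y) (2*j) else 0
        rw [map_smul, hy1]
        split_ifs <;> simp
      · show stepMap k a b (2*j+1) (2*j+2) (c • y (2*j+1)) =
          if u ≤ 2*j+1 ∧ 2*j+2 ≤ v then (c • y) (2*j+2) else 0
        rw [map_smul, hy2]
        split_ifs <;> simp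

lemma mem_HomS_iff {k : Type*} [Field k] {n m : ℕ} {a b : Fin m → ℕ} {u v : ℕ}
    {y : ∀ w : ℕ, IntervalSum k a b w} :
    y ∈ HomS k n a b u v ↔
      ((∀ w : ℕ, ¬(u ≤ w ∧ w ≤ v) → y w = 0) ∧
      ∀ j : ℕ, j < n →
        (stepMap k a b (2*j+1) (2*j) (y (2*j+1)) =
          if u ≤ 2*j ∧ 2*j+1 ≤ v then y (2*j) else 0) ∧
        (stepMap k a b (2*j+1) (2*j+2) (y (2*j+1)) =
          if u ≤ 2*j+1 ∧ 2*j+2 ≤ v then y (2*j+2) else 0)) := Iff.rfl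


section Compute
variable {k : Type*} [Field k] {n m : ℕ} {a b : Fin m → ℕ} {u v : ℕ}

lemma homS_step {y : ∀ w : ℕ, IntervalSum k a b w} (hy : y ∈ HomS k n a b u v)
    (h : ∀ i, a i ≤ b i ∧ b i ≤ 2*n) (hv : v ≤ 2*n)
    (i : Fin m) {w : ℕ} (h1 : u ≤ w) (h3 : w + 1 ≤ v)
    (p : a i ≤ w ∧ w ≤ b i) (q : a i ≤ w + 1 ∧ w + 1 ≤ b i) :
    y w ⟨i, p⟩ = y (w+1) ⟨i, q⟩ := by
  rw [mem_HomS_iff] at hy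
  by_cases hw : w % 2 = 0
  · obtain ⟨j, rfl⟩ : ∃ j, w = 2*j := ⟨w/2, by omega⟩
    have hj : j < n := by omega
    have e := congrFun (hy.2 j hj).1 ⟨i, p.1, p.2⟩
    rw [stepMap_apply, ite_app] at e
    rw [dif_pos (show a i ≤ 2*j+1 ∧ 2*j+1 ≤ b i by omega),
      if_pos (show u ≤ 2*j ∧ 2*j+1 ≤ v from ⟨h1, h3⟩)] at e
    exact e.symm
  · obtain ⟨j, rfl⟩ : ∃ j, w = 2*j+1 := ⟨w/2, by omega⟩
    have hj : j < n := by have := q.2; have := (h i).2; omega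
    have e := congrFun (hy.2 j hj).2 ⟨i, by omega, by omega⟩
    rw [stepMap_apply, ite_app] at e
    rw [dif_pos (show a i ≤ 2*j+1 ∧ 2*j+1 ≤ b i by omega),
      if_pos (show u ≤ 2*j+1 ∧ 2*j+2 ≤ v by omega)] at e
    exact e

lemma homS_const {y : ∀ w : ℕ, IntervalSum k a b w} (hy : y ∈ HomS k n a b u v)
    (h : ∀ i, a i ≤ b i ∧ b i ≤ 2*n) (hv : v ≤ 2*n) (i : Fin m) (w₁ : ℕ)
    (h1 : u ≤ w₁) (p : a i ≤ w₁ ∧ w₁ ≤ b i) :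
    ∀ w₂, w₁ ≤ w₂ → w₂ ≤ v → w₂ ≤ b i → ∀ q : a i ≤ w₂ ∧ w₂ ≤ b i,
      y w₁ ⟨i, p⟩ = y w₂ ⟨i, q⟩ := by
  intro w₂ h12
  induction w₂, h12 using Nat.le_induction with
  | base => intro _ _ q; rfl
  | succ w hw ih =>
    intro h3 h4 q
    have hq : a i ≤ w ∧ w ≤ b i := ⟨by omega, by omega⟩
    rw [ih (by omega) (by omega) hq]
    exact homS_step hy h hv i (by omega) h3 hq q

lemma homS_vanish {y : ∀ w : ℕ, IntervalSum k a b w} (hy : y ∈ HomS k n a b u v)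
    (h : ∀ i, a i ≤ b i ∧ b i ≤ 2*n) (hv : v ≤ 2*n) (huv : u ≤ v) (i : Fin m) {w : ℕ}
    (hw1 : u ≤ w) (hw2 : w ≤ v) (hp : a i ≤ w ∧ w ≤ b i)
    (hnr : ¬ hrel u v (a i) (b i)) : y w ⟨i, hp⟩ = 0 := by
  have hy' := hy
  rw [mem_HomS_iff] at hy'
  unfold hrel at hnr
  have hc : (u < a i ∧ a i % 2 = 0) ∨ (a i < u ∧ u % 2 = 1) ∨
      (b i < v ∧ b i % 2 = 0) ∨ (v < b i ∧ v % 2 = 1) := by omega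
  rcases hc with ⟨hlt, hpar⟩ | ⟨hlt, hpar⟩ | ⟨hlt, hpar⟩ | ⟨hlt, hpar⟩
  · -- KL-A : u < a i, a i even
    obtain ⟨j, hj2⟩ : ∃ j, a i = 2*j+2 := ⟨(a i)/2 - 1, by omega⟩
    have hjn : j < n := by have := (h i).2; omega
    have e := congrFun (hy'.2 j hjn).2 ⟨i, by omega, by omega⟩
    rw [stepMap_apply, ite_app, dif_neg (show ¬(a i ≤ 2*j+1 ∧ 2*j+1 ≤ b i) by omega),
      if_pos (show u ≤ 2*j+1 ∧ 2*j+2 ≤ v by omega)] at e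
    rw [← homS_const hy h hv i (2*j+2) (by omega) ⟨by omega, by omega⟩ w (by omega) hw2 hp.2 hp]
    exact e.symm
  · -- KL-B : a i < u, u odd
    obtain ⟨j, hj2⟩ : ∃ j, u = 2*j+1 := ⟨u/2, by omega⟩
    have hjn : j < n := by omega
    have e := congrFun (hy'.2 j hjn).1 ⟨i, by omega, by omega⟩
    rw [stepMap_apply, ite_app, dif_pos (show a i ≤ 2*j+1 ∧ 2*j+1 ≤ b i by omega),
      if_neg (by omega)] at e
    rw [← homS_const hy h hv i (2*j+1) (by omega) ⟨by omega, by omega⟩ w (by omega) hw2 hp.2 hp]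
    exact e
  · -- KR-A : b i < v, b i even
    obtain ⟨j, hj2⟩ : ∃ j, b i = 2*j := ⟨(b i)/2, by omega⟩
    have hjn : j < n := by omega
    have e := congrFun (hy'.2 j hjn).1 ⟨i, by omega, by omega⟩
    rw [stepMap_apply, ite_app, dif_neg (show ¬(a i ≤ 2*j+1 ∧ 2*j+1 ≤ b i) by omega),
      if_pos (show u ≤ 2*j ∧ 2*j+1 ≤ v by omega)] at e
    rw [homS_const hy h hv i w hw1 hp (2*j) (by omega) (by omega) (by omega) ⟨by omega, by omega⟩]
    exact e.symm
  · -- KR-B : v < b i, v odd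
    obtain ⟨j, hj2⟩ : ∃ j, v = 2*j+1 := ⟨v/2, by omega⟩
    have hjn : j < n := by omega
    have e := congrFun (hy'.2 j hjn).2 ⟨i, by omega, by omega⟩
    rw [stepMap_apply, ite_app, dif_pos (show a i ≤ 2*j+1 ∧ 2*j+1 ≤ b i by omega),
      if_neg (by omega)] at e
    rw [homS_const hy h hv i w hw1 hp (2*j+1) (by omega) (by omega) (by omega) ⟨by omega, by omega⟩]
    exact e


def Gy (t : {i : Fin m // hrel u v (a i) (b i)} → k) : ∀ w : ℕ, IntervalSum k a b w :=
  fun w j => if hc : (u ≤ w ∧ w ≤ v) ∧ hrel u v (a j.1) (b j.1) then t ⟨j.1, hc.2⟩ else 0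

lemma Gy_mem (t : {i : Fin m // hrel u v (a i) (b i)} → k) :
    Gy t ∈ HomS k n a b u v := by
  rw [mem_HomS_iff]
  refine ⟨fun w hw => ?_, fun j hj => ?_⟩
  · funext j'
    exact dif_neg (fun hc => hw hc.1)
  · constructor
    · funext j'
      obtain ⟨i, hA2, hB2⟩ := j'
      rw [stepMap_apply, ite_app]
      simp only [Gy]
      unfold hrel
      split_ifs <;> first | rfl | (exfalso; omega)
    · funext j'
      obtain ⟨i, hA2, hB2⟩ := j'
      rw [stepMap_apply, ite_app]
      simp only [Gy]
      unfold hrel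
      split_ifs <;> first | rfl | (exfalso; omega)

noncomputable def homEquiv (h : ∀ i, a i ≤ b i ∧ b i ≤ 2*n) (huv : u ≤ v) (hv : v ≤ 2*n) :
    (HomS k n a b u v) ≃ₗ[k] ({i : Fin m // hrel u v (a i) (b i)} → k) where
  toFun y i := y.1 (max u (a i.1)) ⟨i.1, le_max_right _ _, max_le i.2.2.1 (h i.1).1⟩
  map_add' y z := rfl
  map_smul' c y := rfl
  invFun t := ⟨Gy t, Gy_mem t⟩
  left_inv := by
    rintro ⟨y, hy⟩
    apply Subtype.ext
    funext w j'
    obtain ⟨i, hA, hB⟩ := j'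
    show (if hc : (u ≤ w ∧ w ≤ v) ∧ hrel u v (a i) (b i) then
        y (max u (a i)) ⟨i, le_max_right _ _, max_le hc.2.2.1 (h i).1⟩ else 0) = y w ⟨i, hA, hB⟩
    split_ifs with hc
    · exact homS_const hy h hv i (max u (a i)) (le_max_left _ _)
        ⟨le_max_right _ _, max_le hc.2.2.1 (h i).1⟩ w (max_le hc.1.1 hA) hc.1.2 hB ⟨hA, hB⟩
    · by_cases hw : u ≤ w ∧ w ≤ v
      · exact (homS_vanish hy h hv huv i hw.1 hw.2 ⟨hA, hB⟩ (fun hr => hc ⟨hw, hr⟩)).symm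
      · rw [mem_HomS_iff] at hy
        exact (congrFun (hy.1 w hw) ⟨i, hA, hB⟩).symm
  right_inv := by
    intro t
    funext i
    show (if hc : (u ≤ max u (a i.1) ∧ max u (a i.1) ≤ v) ∧ hrel u v (a i.1) (b i.1) then
        t ⟨i.1, hc.2⟩ else 0) = t i
    rw [dif_pos ⟨⟨le_max_left _ _, max_le huv i.2.1⟩, i.2⟩]

end Compute

section Transfer

variable {k : Type*} [Field k] {n m₁ m₂ : ℕ} {a₁ b₁ : Fin m₁ → ℕ} {a₂ b₂ : Fin m₂ → ℕ}

lemma mem_homS_map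
    (Λ : ∀ w : ℕ, IntervalSum k a₁ b₁ w →ₗ[k] IntervalSum k a₂ b₂ w)
    (hA : ∀ j, j < n → ∀ x, Λ (2*j) (stepMap k a₁ b₁ (2*j+1) (2*j) x) =
      stepMap k a₂ b₂ (2*j+1) (2*j) (Λ (2*j+1) x))
    (hC : ∀ j, j < n → ∀ x, Λ (2*j+2) (stepMap k a₁ b₁ (2*j+1) (2*j+2) x) =
      stepMap k a₂ b₂ (2*j+1) (2*j+2) (Λ (2*j+1) x))
    {u v : ℕ} {y : ∀ w : ℕ, IntervalSum k a₁ b₁ w} (hy : y ∈ HomS k n a₁ b₁ u v) :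
    (fun w => Λ w (y w)) ∈ HomS k n a₂ b₂ u v := by
  rw [mem_HomS_iff] at hy ⊢
  obtain ⟨h0, hc⟩ := hy
  refine ⟨fun w hw => ?_, fun j hj => ?_⟩
  · show Λ w (y w) = 0
    rw [h0 w hw, map_zero]
  · obtain ⟨e1, e2⟩ := hc j hj
    constructor
    · show stepMap k a₂ b₂ (2*j+1) (2*j) (Λ (2*j+1) (y (2*j+1))) =
        if u ≤ 2*j ∧ 2*j+1 ≤ v then Λ (2*j) (y (2*j)) else 0
      rw [← hA j hj, e1]
      split_ifs <;> simp
    · show stepMap k a₂ b₂ (2*j+1) (2*j+2) (Λ (2*j+1) (y (2*j+1))) =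
        if u ≤ 2*j+1 ∧ 2*j+2 ≤ v then Λ (2*j+2) (y (2*j+2)) else 0
      rw [← hC j hj, e2]
      split_ifs <;> simp

lemma card_hrel_eq
    (h₁ : ∀ i, a₁ i ≤ b₁ i ∧ b₁ i ≤ 2 * n)
    (h₂ : ∀ i, a₂ i ≤ b₂ i ∧ b₂ i ≤ 2 * n)
    (φ : ∀ v : Fin (2 * n + 1), IntervalSum k a₁ b₁ (v : ℕ) ≃ₗ[k] IntervalSum k a₂ b₂ (v : ℕ))
    (hf : ∀ (j : Fin n) (x : IntervalSum k a₁ b₁ (vB j : ℕ)),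
      φ (vA j) (stepMap k a₁ b₁ (vB j : ℕ) (vA j : ℕ) x) =
        stepMap k a₂ b₂ (vB j : ℕ) (vA j : ℕ) (φ (vB j) x))
    (hg : ∀ (j : Fin n) (x : IntervalSum k a₁ b₁ (vB j : ℕ)),
      φ (vC j) (stepMap k a₁ b₁ (vB j : ℕ) (vC j : ℕ) x) =
        stepMap k a₂ b₂ (vB j : ℕ) (vC j : ℕ) (φ (vB j) x))
    (u v : ℕ) (huv : u ≤ v) (hv : v ≤ 2*n) :
    Fintype.card {i : Fin m₁ // hrel u v (a₁ i) (b₁ i)} =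
      Fintype.card {i : Fin m₂ // hrel u v (a₂ i) (b₂ i)} := by
  have hf' : ∀ (j : ℕ) (hj : j < n) (x : IntervalSum k a₁ b₁ (2*j+1)),
      (φ ⟨2*j, by omega⟩) (stepMap k a₁ b₁ (2*j+1) (2*j) x) =
        stepMap k a₂ b₂ (2*j+1) (2*j) ((φ ⟨2*j+1, by omega⟩) x) := fun j hj x => hf ⟨j, hj⟩ x
  have hg' : ∀ (j : ℕ) (hj : j < n) (x : IntervalSum k a₁ b₁ (2*j+1)),
      (φ ⟨2*j+2, by omega⟩) (stepMap k a₁ b₁ (2*j+1) (2*j+2) x) =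
        stepMap k a₂ b₂ (2*j+1) (2*j+2) ((φ ⟨2*j+1, by omega⟩) x) := fun j hj x => hg ⟨j, hj⟩ x
  let Λ : ∀ w : ℕ, IntervalSum k a₁ b₁ w →ₗ[k] IntervalSum k a₂ b₂ w :=
    fun w => if hw : w ≤ 2*n then ((φ ⟨w, by omega⟩).toLinearMap) else 0
  let Λ' : ∀ w : ℕ, IntervalSum k a₂ b₂ w →ₗ[k] IntervalSum k a₁ b₁ w :=
    fun w => if hw : w ≤ 2*n then ((φ ⟨w, by omega⟩).symm.toLinearMap) else 0
  have hΛval : ∀ w (hw : w ≤ 2*n), Λ w = (φ ⟨w, by omega⟩).toLinearMap := by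
    intro w hw; simp only [Λ, dif_pos hw]
  have hΛ'val : ∀ w (hw : w ≤ 2*n), Λ' w = (φ ⟨w, by omega⟩).symm.toLinearMap := by
    intro w hw; simp only [Λ', dif_pos hw]
  have hΛA : ∀ j, j < n → ∀ x, Λ (2*j) (stepMap k a₁ b₁ (2*j+1) (2*j) x) =
      stepMap k a₂ b₂ (2*j+1) (2*j) (Λ (2*j+1) x) := by
    intro j hj x
    rw [hΛval (2*j) (by omega), hΛval (2*j+1) (by omega)]
    exact hf' j hj x
  have hΛC : ∀ j, j < n → ∀ x, Λ (2*j+2) (stepMap k a₁ b₁ (2*j+1) (2*j+2) x) =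
      stepMap k a₂ b₂ (2*j+1) (2*j+2) (Λ (2*j+1) x) := by
    intro j hj x
    rw [hΛval (2*j+2) (by omega), hΛval (2*j+1) (by omega)]
    exact hg' j hj x
  have hΛ'A : ∀ j, j < n → ∀ x, Λ' (2*j) (stepMap k a₂ b₂ (2*j+1) (2*j) x) =
      stepMap k a₁ b₁ (2*j+1) (2*j) (Λ' (2*j+1) x) := by
    intro j hj x
    rw [hΛ'val (2*j) (by omega), hΛ'val (2*j+1) (by omega)]
    have h0 := hf' j hj ((φ ⟨2*j+1, by omega⟩).symm x)
    simp only [LinearEquiv.apply_symm_apply] at h0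
    rw [← h0]
    simp
  have hΛ'C : ∀ j, j < n → ∀ x, Λ' (2*j+2) (stepMap k a₂ b₂ (2*j+1) (2*j+2) x) =
      stepMap k a₁ b₁ (2*j+1) (2*j+2) (Λ' (2*j+1) x) := by
    intro j hj x
    rw [hΛ'val (2*j+2) (by omega), hΛ'val (2*j+1) (by omega)]
    have h0 := hg' j hj ((φ ⟨2*j+1, by omega⟩).symm x)
    simp only [LinearEquiv.apply_symm_apply] at h0
    rw [← h0]
    simp
  let E : (HomS k n a₁ b₁ u v) ≃ₗ[k] (HomS k n a₂ b₂ u v) :=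
    { toFun := fun y => ⟨fun w => Λ w (y.1 w), mem_homS_map Λ hΛA hΛC y.2⟩
      invFun := fun z => ⟨fun w => Λ' w (z.1 w), mem_homS_map Λ' hΛ'A hΛ'C z.2⟩
      map_add' := fun y z => Subtype.ext (funext fun w => map_add (Λ w) _ _)
      map_smul' := fun c y => Subtype.ext (funext fun w => map_smul (Λ w) _ _)
      left_inv := by
        rintro ⟨y, hy⟩
        apply Subtype.ext
        funext w
        by_cases hw : w ≤ 2*n
        · show Λ' w (Λ w (y w)) = y w
          rw [hΛval w hw, hΛ'val w hw]
          simp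
        · show Λ' w (Λ w (y w)) = y w
          rw [mem_HomS_iff] at hy
          rw [hy.1 w (by omega)]
          simp
      right_inv := by
        rintro ⟨y, hy⟩
        apply Subtype.ext
        funext w
        by_cases hw : w ≤ 2*n
        · show Λ w (Λ' w (y w)) = y w
          rw [hΛval w hw, hΛ'val w hw]
          simp
        · show Λ w (Λ' w (y w)) = y w
          rw [mem_HomS_iff] at hy
          rw [hy.1 w (by omega)]
          simp }
  have e1 := homEquiv (k := k) (n := n) h₁ huv hv
  have e2 := homEquiv (k := k) (n := n) h₂ huv hv
  have := LinearEquiv.finrank_eq ((e1.symm.trans E).trans e2)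
  rwa [Module.finrank_fintype_fun_eq_card, Module.finrank_fintype_fun_eq_card] at this

end Transfer

section Count

open Finset

variable {n : ℕ}

lemma Nfib_invalid {m : ℕ} (a b : Fin m → ℕ) (h : ∀ i, a i ≤ b i ∧ b i ≤ 2*n) {A B : ℕ}
    (hv : ¬(A ≤ B ∧ B ≤ 2*n)) :
    (Finset.univ.filter (fun i => a i = A ∧ b i = B)).card = 0 := by
  rw [Finset.card_eq_zero, Finset.filter_eq_empty_iff]
  intro i _
  have := h i
  omega

lemma filter_hrel_card {m : ℕ} (a b : Fin m → ℕ) (h : ∀ i, a i ≤ b i ∧ b i ≤ 2*n) (A B : ℕ) :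
    (Finset.univ.filter (fun i => hrel A B (a i) (b i))).card =
      ∑ p ∈ Finset.range (2*n+1) ×ˢ Finset.range (2*n+1),
        (fun p : ℕ × ℕ => if hrel A B p.1 p.2 then
          (Finset.univ.filter (fun i => a i = p.1 ∧ b i = p.2)).card else 0) p := by
  rw [Finset.card_eq_sum_card_fiberwise (f := fun i => (a i, b i))
    (t := Finset.range (2*n+1) ×ˢ Finset.range (2*n+1))
    (fun i _ => by simp only [Finset.mem_coe, Finset.mem_product, Finset.mem_range]; have := h i; omega)]
  apply Finset.sum_congr rfl
  intro p hp
  rw [Finset.filter_filter]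
  by_cases hr : hrel A B p.1 p.2
  · simp only [if_pos hr]
    congr 1
    apply Finset.filter_congr
    intro i _
    constructor
    · rintro ⟨-, h2⟩
      exact ⟨congrArg Prod.fst h2, congrArg Prod.snd h2⟩
    · rintro ⟨e1, e2⟩
      refine ⟨by rw [e1, e2]; exact hr, ?_⟩
      rw [e1, e2]
  · simp only [if_neg hr]
    rw [Finset.card_eq_zero, Finset.filter_eq_empty_iff]
    rintro i - ⟨hri, h2⟩
    exact hr (by rw [← congrArg Prod.fst h2, ← congrArg Prod.snd h2]; exact hri)


lemma count_eq {m₁ m₂ : ℕ} (a₁ b₁ : Fin m₁ → ℕ) (a₂ b₂ : Fin m₂ → ℕ)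
    (h₁ : ∀ i, a₁ i ≤ b₁ i ∧ b₁ i ≤ 2 * n)
    (h₂ : ∀ i, a₂ i ≤ b₂ i ∧ b₂ i ≤ 2 * n)
    (hH : ∀ u v : ℕ, u ≤ v → v ≤ 2*n →
      (Finset.univ.filter (fun i => hrel u v (a₁ i) (b₁ i))).card =
      (Finset.univ.filter (fun i => hrel u v (a₂ i) (b₂ i))).card) :
    ∀ A B : ℕ, (Finset.univ.filter (fun i => a₁ i = A ∧ b₁ i = B)).card =
      (Finset.univ.filter (fun i => a₂ i = A ∧ b₂ i = B)).card := by
  have key : ∀ r A B : ℕ, rho n A B < r →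
      (Finset.univ.filter (fun i => a₁ i = A ∧ b₁ i = B)).card =
        (Finset.univ.filter (fun i => a₂ i = A ∧ b₂ i = B)).card := by
    intro r
    induction r with
    | zero => intro A B h; omega
    | succ r ih =>
      intro A B hr
      by_cases hval : A ≤ B ∧ B ≤ 2*n
      · have hH' := hH A B hval.1 hval.2
        rw [filter_hrel_card a₁ b₁ h₁ A B, filter_hrel_card a₂ b₂ h₂ A B] at hH'
        have hABmem : (A, B) ∈ Finset.range (2*n+1) ×ˢ Finset.range (2*n+1) := by
          simp only [Finset.mem_product, Finset.mem_range]; omega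
        rw [← Finset.add_sum_erase _ _ hABmem, ← Finset.add_sum_erase _ _ hABmem] at hH'
        have hsum : ∑ p ∈ (Finset.range (2*n+1) ×ˢ Finset.range (2*n+1)).erase (A, B),
            (fun p : ℕ × ℕ => if hrel A B p.1 p.2 then
              (Finset.univ.filter (fun i => a₁ i = p.1 ∧ b₁ i = p.2)).card else 0) p =
            ∑ p ∈ (Finset.range (2*n+1) ×ˢ Finset.range (2*n+1)).erase (A, B),
            (fun p : ℕ × ℕ => if hrel A B p.1 p.2 then
              (Finset.univ.filter (fun i => a₂ i = p.1 ∧ b₂ i = p.2)).card else 0) p := by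
          apply Finset.sum_congr rfl
          intro p hp
          simp only
          by_cases hrp : hrel A B p.1 p.2
          · rw [if_pos hrp, if_pos hrp]
            by_cases hpv : p.1 ≤ p.2 ∧ p.2 ≤ 2*n
            · have hne : ¬(p.1 = A ∧ p.2 = B) := by
                intro hcontra
                exact (Finset.mem_erase.mp hp).1 (Prod.ext hcontra.1 hcontra.2)
              have hlt := rho_lt (n := n) hpv.1 hpv.2 hval.1 hval.2 hrp hne
              exact ih p.1 p.2 (by omega)
            · rw [Nfib_invalid a₁ b₁ h₁ hpv, Nfib_invalid a₂ b₂ h₂ hpv]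
          · rw [if_neg hrp, if_neg hrp]
        simp only at hH' hsum
        simp only [hrel_self hval.1, if_true] at hH'
        rw [hsum] at hH'
        omega
      · rw [Nfib_invalid a₁ b₁ h₁ hval, Nfib_invalid a₂ b₂ h₂ hval]
  intro A B
  exact key (rho n A B + 1) A B (by omega)

end Count


/-- **Corollary 7.2 (uniqueness part).** The interval decomposition is unique: if two
finite families of intervals `[a₁ i, b₁ i]` (`i : Fin m₁`) and `[a₂ i, b₂ i]`
(`i : Fin m₂`), with `0 ≤ a ≤ b ≤ 2n`, give isomorphic direct sums of interval
representations of the quiver (isomorphisms at each vertex commuting with all structure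
maps), then the two families coincide as multisets: there is a bijection
`e : Fin m₁ ≃ Fin m₂` matching the intervals. -/
theorem stmt3 (k : Type*) [Field k] (n : ℕ) (hn : 1 ≤ n)
    (m₁ m₂ : ℕ) (a₁ b₁ : Fin m₁ → ℕ) (a₂ b₂ : Fin m₂ → ℕ)
    (h₁ : ∀ i, a₁ i ≤ b₁ i ∧ b₁ i ≤ 2 * n)
    (h₂ : ∀ i, a₂ i ≤ b₂ i ∧ b₂ i ≤ 2 * n)
    (φ : ∀ v : Fin (2 * n + 1), IntervalSum k a₁ b₁ (v : ℕ) ≃ₗ[k] IntervalSum k a₂ b₂ (v : ℕ))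
    (hf : ∀ (j : Fin n) (x : IntervalSum k a₁ b₁ (vB j : ℕ)),
      φ (vA j) (stepMap k a₁ b₁ (vB j : ℕ) (vA j : ℕ) x) =
        stepMap k a₂ b₂ (vB j : ℕ) (vA j : ℕ) (φ (vB j) x))
    (hg : ∀ (j : Fin n) (x : IntervalSum k a₁ b₁ (vB j : ℕ)),
      φ (vC j) (stepMap k a₁ b₁ (vB j : ℕ) (vC j : ℕ) x) =
        stepMap k a₂ b₂ (vB j : ℕ) (vC j : ℕ) (φ (vB j) x)) :
    ∃ e : Fin m₁ ≃ Fin m₂, ∀ i, a₂ (e i) = a₁ i ∧ b₂ (e i) = b₁ i := by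
  have hH : ∀ u v : ℕ, u ≤ v → v ≤ 2*n →
      (Finset.univ.filter (fun i => hrel u v (a₁ i) (b₁ i))).card =
      (Finset.univ.filter (fun i => hrel u v (a₂ i) (b₂ i))).card := by
    intro u v huv hv
    have := card_hrel_eq h₁ h₂ φ hf hg u v huv hv
    rwa [Fintype.card_subtype, Fintype.card_subtype] at this
  have hN := count_eq a₁ b₁ a₂ b₂ h₁ h₂ hH
  have hfib : ∀ p : ℕ × ℕ,
      Fintype.card {i : Fin m₁ // (fun i => (a₁ i, b₁ i)) i = p} =
      Fintype.card {i : Fin m₂ // (fun i => (a₂ i, b₂ i)) i = p} := by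
    intro p
    rw [Fintype.card_subtype, Fintype.card_subtype]
    have e1 : Finset.univ.filter (fun i => (fun i => (a₁ i, b₁ i)) i = p) =
        Finset.univ.filter (fun i => a₁ i = p.1 ∧ b₁ i = p.2) := by
      apply Finset.filter_congr
      intro i _
      constructor
      · intro h2; exact ⟨congrArg Prod.fst h2, congrArg Prod.snd h2⟩
      · rintro ⟨e1, e2⟩; show (a₁ i, b₁ i) = p; rw [e1, e2]
    have e2 : Finset.univ.filter (fun i => (fun i => (a₂ i, b₂ i)) i = p) =
        Finset.univ.filter (fun i => a₂ i = p.1 ∧ b₂ i = p.2) := by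
      apply Finset.filter_congr
      intro i _
      constructor
      · intro h2; exact ⟨congrArg Prod.fst h2, congrArg Prod.snd h2⟩
      · rintro ⟨e1, e2⟩; show (a₂ i, b₂ i) = p; rw [e1, e2]
    rw [e1, e2]
    exact hN p.1 p.2
  let E : ∀ p : ℕ × ℕ, {i : Fin m₁ // (fun i => (a₁ i, b₁ i)) i = p} ≃
      {i : Fin m₂ // (fun i => (a₂ i, b₂ i)) i = p} := fun p => Fintype.equivOfCardEq (hfib p)
  refine ⟨(Equiv.sigmaFiberEquiv (fun i => (a₁ i, b₁ i))).symm.trans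
    ((Equiv.sigmaCongrRight E).trans (Equiv.sigmaFiberEquiv (fun i => (a₂ i, b₂ i)))), fun i => ?_⟩
  have h2 := (E (a₁ i, b₁ i) ⟨i, rfl⟩).2
  have he : ((Equiv.sigmaFiberEquiv (fun i => (a₁ i, b₁ i))).symm.trans
      ((Equiv.sigmaCongrRight E).trans (Equiv.sigmaFiberEquiv (fun i => (a₂ i, b₂ i))))) i =
      (E (a₁ i, b₁ i) ⟨i, rfl⟩).1 := rfl
  rw [he]
  exact ⟨congrArg Prod.fst h2, congrArg Prod.snd h2⟩

end ThreeCusps
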